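/- arXiv:1603.01500 — 7 statements merged into one kernel-verified Lean document; each statement's English description precedes it below -/
import Mathlib

section
/- For any two points p = (x1,y1) and q = (x2,y2) in the Manhattan plane with x1 = x2 or y1 = y2, the linear segment t ↦ (1-t)·p + t·q, t ∈ [0,1], is (up to reparametrization by arc length) the unique shortest path from p to q; i.e., any path from p to q whose length equals d1(p,q) has image equal to the segment between p and q. -/
/-- The Manhattan plane: `ℝ²` with the `ℓ¹` metric
`d₁((x₁,y₁),(x₂,y₂)) = |x₁-x₂| + |y₁-y₂|`. -/
noncomputable abbrev M1 := WithLp 1 (ℝ × ℝ)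

instance : Fact ((1 : ENNReal) ≤ 1) := ⟨le_rfl⟩

set_option maxHeartbeats 2000000 in
/-- If `p` and `q` share an abscissa or an ordinate, then any continuous path from `p` to `q`
whose `d₁`-length equals `d₁(p,q)` has image exactly the linear segment between `p` and `q`;
i.e. the segment is, up to reparametrization, the unique shortest path. -/
theorem unique_shortest_path_of_aligned
    (p q : M1)
    (h : (WithLp.equiv 1 (ℝ × ℝ) p).1 = (WithLp.equiv 1 (ℝ × ℝ) q).1 ∨
         (WithLp.equiv 1 (ℝ × ℝ) p).2 = (WithLp.equiv 1 (ℝ × ℝ) q).2)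
    (γ : ℝ → M1)
    (hγ : ContinuousOn γ (Set.Icc 0 1))
    (h0 : γ 0 = p) (h1 : γ 1 = q)
    (hlen : eVariationOn γ (Set.Icc 0 1) = ENNReal.ofReal (dist p q)) :
    γ '' Set.Icc 0 1 = segment ℝ p q := by
  have hd : ∀ a b : M1, dist a b = dist a.ofLp.1 b.ofLp.1 + dist a.ofLp.2 b.ofLp.2 := by
    intro a b
    rw [WithLp.prod_dist_eq_add (by norm_num)]
    norm_num
  -- every point of the path lies metrically between p and q
  have key : ∀ t ∈ Set.Icc (0:ℝ) 1, dist p (γ t) + dist (γ t) q = dist p q := by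
    intro t ht
    have hsplit := eVariationOn.Icc_add_Icc γ (s := Set.Icc (0:ℝ) 1) ht.1 ht.2 ht
    rw [Set.inter_eq_self_of_subset_right (Set.Icc_subset_Icc le_rfl ht.2),
        Set.inter_eq_self_of_subset_right (Set.Icc_subset_Icc ht.1 le_rfl),
        Set.inter_eq_self_of_subset_right (Set.Icc_subset_Icc le_rfl le_rfl)] at hsplit
    have e1 : edist (γ 0) (γ t) ≤ eVariationOn γ (Set.Icc 0 t) :=
      eVariationOn.edist_le γ ⟨le_rfl, ht.1⟩ ⟨ht.1, le_rfl⟩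
    have e2 : edist (γ t) (γ 1) ≤ eVariationOn γ (Set.Icc t 1) :=
      eVariationOn.edist_le γ ⟨le_rfl, ht.2⟩ ⟨ht.2, le_rfl⟩
    rw [h0] at e1; rw [h1] at e2
    have hsum : edist p (γ t) + edist (γ t) q ≤ ENNReal.ofReal (dist p q) := by
      rw [← hlen, ← hsplit]; exact add_le_add e1 e2
    rw [edist_dist, edist_dist, ← ENNReal.ofReal_add dist_nonneg dist_nonneg] at hsum
    have hle : dist p (γ t) + dist (γ t) q ≤ dist p q :=
      (ENNReal.ofReal_le_ofReal_iff dist_nonneg).mp hsum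
    exact le_antisymm hle (dist_triangle _ _ _)
  rcases h with hx | hy
  · -- same abscissa
    have hx : p.ofLp.1 = q.ofLp.1 := hx
    ext z
    constructor
    · rintro ⟨t, ht, rfl⟩
      have hk := key t ht
      rw [hd, hd, hd] at hk
      have hq0 : dist p.ofLp.1 q.ofLp.1 = 0 := by rw [hx, dist_self]
      have htr : dist p.ofLp.2 q.ofLp.2 ≤ dist p.ofLp.2 (γ t).ofLp.2 + dist (γ t).ofLp.2 q.ofLp.2 := dist_triangle _ _ _
      have h10 : dist p.ofLp.1 (γ t).ofLp.1 = 0 := by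
        nlinarith [dist_nonneg (x := p.ofLp.1) (y := (γ t).ofLp.1), dist_nonneg (x := (γ t).ofLp.1) (y := q.ofLp.1)]
      have hz1 : (γ t).ofLp.1 = p.ofLp.1 := (dist_eq_zero.mp h10).symm
      have h2eq : dist p.ofLp.2 (γ t).ofLp.2 + dist (γ t).ofLp.2 q.ofLp.2 = dist p.ofLp.2 q.ofLp.2 := by
        have h20 : dist (γ t).ofLp.1 q.ofLp.1 = 0 := by
          nlinarith [dist_nonneg (x := p.ofLp.1) (y := (γ t).ofLp.1), dist_nonneg (x := (γ t).ofLp.1) (y := q.ofLp.1)]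
        linarith
      obtain ⟨a, b, ha, hb, hab, hz2⟩ :=
        mem_segment_iff_wbtw.mpr (dist_add_dist_eq_iff.mp h2eq)
      refine ⟨a, b, ha, hb, hab, congrArg (WithLp.toLp 1) (Prod.ext ?_ hz2)⟩
      show a • p.ofLp.1 + b • q.ofLp.1 = (γ t).ofLp.1
      rw [← hx, hz1, smul_eq_mul, smul_eq_mul]
      linear_combination p.ofLp.1 * hab
    · rintro ⟨a, b, ha, hb, hab, rfl⟩
      have hz1 : (a • p + b • q).ofLp.1 = p.ofLp.1 := by
        show a • p.ofLp.1 + b • q.ofLp.1 = p.ofLp.1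
        rw [← hx, smul_eq_mul, smul_eq_mul]
        linear_combination p.ofLp.1 * hab
      have hz2 : (a • p + b • q).ofLp.2 ∈ Set.uIcc p.ofLp.2 q.ofLp.2 := by
        rw [← segment_eq_uIcc]
        exact ⟨a, b, ha, hb, hab, rfl⟩
      have hc : ContinuousOn (fun t => (γ t).ofLp.2) (Set.uIcc (0:ℝ) 1) := by
        rw [Set.uIcc_of_le zero_le_one]
        exact Continuous.comp_continuousOn (g := fun x : M1 => x.ofLp.2) (WithLp.prod_continuous_ofLp 1 ℝ ℝ).snd hγ
      have hiv := intermediate_value_uIcc hc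
      rw [h0, h1, Set.uIcc_of_le zero_le_one] at hiv
      obtain ⟨t, ht, h2t⟩ := hiv hz2
      refine ⟨t, ht, ?_⟩
      have hk := key t ht
      rw [hd, hd, hd] at hk
      have hq0 : dist p.ofLp.1 q.ofLp.1 = 0 := by rw [hx, dist_self]
      have htr : dist p.ofLp.2 q.ofLp.2 ≤ dist p.ofLp.2 (γ t).ofLp.2 + dist (γ t).ofLp.2 q.ofLp.2 := dist_triangle _ _ _
      have h10 : dist p.ofLp.1 (γ t).ofLp.1 = 0 := by
        nlinarith [dist_nonneg (x := p.ofLp.1) (y := (γ t).ofLp.1), dist_nonneg (x := (γ t).ofLp.1) (y := q.ofLp.1)]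
      exact congrArg (WithLp.toLp 1) (Prod.ext ((dist_eq_zero.mp h10).symm.trans hz1.symm) h2t)
  · -- same ordinate
    have hy : p.ofLp.2 = q.ofLp.2 := hy
    ext z
    constructor
    · rintro ⟨t, ht, rfl⟩
      have hk := key t ht
      rw [hd, hd, hd] at hk
      have hq0 : dist p.ofLp.2 q.ofLp.2 = 0 := by rw [hy, dist_self]
      have htr : dist p.ofLp.1 q.ofLp.1 ≤ dist p.ofLp.1 (γ t).ofLp.1 + dist (γ t).ofLp.1 q.ofLp.1 := dist_triangle _ _ _
      have h10 : dist p.ofLp.2 (γ t).ofLp.2 = 0 := by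
        nlinarith [dist_nonneg (x := p.ofLp.2) (y := (γ t).ofLp.2), dist_nonneg (x := (γ t).ofLp.2) (y := q.ofLp.2)]
      have hz2 : (γ t).ofLp.2 = p.ofLp.2 := (dist_eq_zero.mp h10).symm
      have h1eq : dist p.ofLp.1 (γ t).ofLp.1 + dist (γ t).ofLp.1 q.ofLp.1 = dist p.ofLp.1 q.ofLp.1 := by
        have h20 : dist (γ t).ofLp.2 q.ofLp.2 = 0 := by
          nlinarith [dist_nonneg (x := p.ofLp.2) (y := (γ t).ofLp.2), dist_nonneg (x := (γ t).ofLp.2) (y := q.ofLp.2)]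
        linarith
      obtain ⟨a, b, ha, hb, hab, hz1⟩ :=
        mem_segment_iff_wbtw.mpr (dist_add_dist_eq_iff.mp h1eq)
      refine ⟨a, b, ha, hb, hab, congrArg (WithLp.toLp 1) (Prod.ext hz1 ?_)⟩
      show a • p.ofLp.2 + b • q.ofLp.2 = (γ t).ofLp.2
      rw [← hy, hz2, smul_eq_mul, smul_eq_mul]
      linear_combination p.ofLp.2 * hab
    · rintro ⟨a, b, ha, hb, hab, rfl⟩
      have hz2 : (a • p + b • q).ofLp.2 = p.ofLp.2 := by
        show a • p.ofLp.2 + b • q.ofLp.2 = p.ofLp.2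
        rw [← hy, smul_eq_mul, smul_eq_mul]
        linear_combination p.ofLp.2 * hab
      have hz1 : (a • p + b • q).ofLp.1 ∈ Set.uIcc p.ofLp.1 q.ofLp.1 := by
        rw [← segment_eq_uIcc]
        exact ⟨a, b, ha, hb, hab, rfl⟩
      have hc : ContinuousOn (fun t => (γ t).ofLp.1) (Set.uIcc (0:ℝ) 1) := by
        rw [Set.uIcc_of_le zero_le_one]
        exact Continuous.comp_continuousOn (g := fun x : M1 => x.ofLp.1) (WithLp.prod_continuous_ofLp 1 ℝ ℝ).fst hγ
      have hiv := intermediate_value_uIcc hc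
      rw [h0, h1, Set.uIcc_of_le zero_le_one] at hiv
      obtain ⟨t, ht, h1t⟩ := hiv hz1
      refine ⟨t, ht, ?_⟩
      have hk := key t ht
      rw [hd, hd, hd] at hk
      have hq0 : dist p.ofLp.2 q.ofLp.2 = 0 := by rw [hy, dist_self]
      have htr : dist p.ofLp.1 q.ofLp.1 ≤ dist p.ofLp.1 (γ t).ofLp.1 + dist (γ t).ofLp.1 q.ofLp.1 := dist_triangle _ _ _
      have h10 : dist p.ofLp.2 (γ t).ofLp.2 = 0 := by
        nlinarith [dist_nonneg (x := p.ofLp.2) (y := (γ t).ofLp.2), dist_nonneg (x := (γ t).ofLp.2) (y := q.ofLp.2)]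
      exact congrArg (WithLp.toLp 1) (Prod.ext h1t ((dist_eq_zero.mp h10).symm.trans hz2.symm))
end

section
/- A path α = (α1, α2) : [a,b] → ℝ² with α(a) = (x1,y1), α(b) = (x2,y2), x1 ≤ x2 and y1 ≤ y2, is a shortest path in the Manhattan plane if and only if both coordinate functions α1 and α2 are monotone non-decreasing. -/
lemma dist_M1 (x y : M1) : dist x y = |x.fst - y.fst| + |x.snd - y.snd| := by
  rw [WithLp.prod_dist_eq_add (by norm_num : 0 < (1 : ENNReal).toReal)]
  simp [Real.dist_eq]

/-- Key partition lemma: if the variation equals the endpoint distance, then any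
4-point partition sum is at most the endpoint distance. -/
lemma partition_le (a b : ℝ) (α : ℝ → M1)
    (heq : eVariationOn α (Set.Icc a b) = ENNReal.ofReal (dist (α a) (α b)))
    {s t : ℝ} (hs : s ∈ Set.Icc a b) (ht : t ∈ Set.Icc a b) (hst : s ≤ t) :
    dist (α a) (α s) + dist (α s) (α t) + dist (α t) (α b) ≤ dist (α a) (α b) := by
  obtain ⟨has, hsb⟩ := hs
  obtain ⟨hat, htb⟩ := ht
  set u : ℕ → ℝ := fun k => if k ≤ 0 then a else if k ≤ 1 then s else if k ≤ 2 then t else b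
    with hu_def
  have hu : Monotone u := by
    apply monotone_nat_of_le_succ
    intro k
    match k with
    | 0 => simpa [hu_def] using has
    | 1 => simpa [hu_def] using hst
    | 2 => simpa [hu_def] using htb
    | (n+3) => simp [hu_def]
  have hus : ∀ i, u i ∈ Set.Icc a b := by
    intro i
    match i with
    | 0 => exact ⟨le_refl a, le_trans has hsb⟩
    | 1 => exact ⟨has, hsb⟩
    | 2 => exact ⟨hat, htb⟩
    | (n+3) => exact ⟨le_trans has hsb, le_refl b⟩
  have hsum := eVariationOn.sum_le (f := α) (n := 3) hu hus
  rw [heq] at hsum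
  have h3 : (∑ i ∈ Finset.range 3, edist (α (u (i + 1))) (α (u i)))
      = ENNReal.ofReal (dist (α a) (α s) + dist (α s) (α t) + dist (α t) (α b)) := by
    rw [Finset.sum_range_succ, Finset.sum_range_succ, Finset.sum_range_one]
    have h0 : u 0 = a := rfl
    have h1 : u 1 = s := rfl
    have h2 : u 2 = t := rfl
    have h3' : u 3 = b := rfl
    rw [h0, h1, h2, h3']
    rw [edist_dist, edist_dist, edist_dist,
      ← ENNReal.ofReal_add dist_nonneg dist_nonneg,
      ← ENNReal.ofReal_add (by positivity) dist_nonneg]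
    rw [dist_comm (α s) (α a), dist_comm (α t) (α s), dist_comm (α b) (α t)]
  rw [h3] at hsum
  exact (ENNReal.ofReal_le_ofReal_iff dist_nonneg).mp hsum

/-- A path `α : [a,b] → ℝ²` from `(x₁,y₁)` to `(x₂,y₂)` with `x₁ ≤ x₂` and `y₁ ≤ y₂` is a
shortest path in the Manhattan plane (its `d₁`-length equals the `d₁`-distance of its
endpoints) if and only if both coordinate functions are monotone non-decreasing on `[a,b]`. -/
theorem shortest_path_iff_monotone_components
    (a b : ℝ) (hab : a ≤ b) (α : ℝ → M1)
    (hc : ContinuousOn α (Set.Icc a b))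
    (hx : (WithLp.equiv 1 (ℝ × ℝ) (α a)).1 ≤ (WithLp.equiv 1 (ℝ × ℝ) (α b)).1)
    (hy : (WithLp.equiv 1 (ℝ × ℝ) (α a)).2 ≤ (WithLp.equiv 1 (ℝ × ℝ) (α b)).2) :
    eVariationOn α (Set.Icc a b) = ENNReal.ofReal (dist (α a) (α b)) ↔
      MonotoneOn (fun t => (WithLp.equiv 1 (ℝ × ℝ) (α t)).1) (Set.Icc a b) ∧
      MonotoneOn (fun t => (WithLp.equiv 1 (ℝ × ℝ) (α t)).2) (Set.Icc a b) := by
  have hx' : (α a).fst ≤ (α b).fst := hx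
  have hy' : (α a).snd ≤ (α b).snd := hy
  constructor
  · intro heq
    constructor
    · intro s hs t ht hst
      by_contra hlt
      push_neg at hlt
      have key := partition_le a b α heq hs ht hst
      rw [dist_M1, dist_M1, dist_M1, dist_M1] at key
      have hlt' : (α t).fst < (α s).fst := hlt
      have e1 : (α s).fst - (α a).fst ≤ |(α a).fst - (α s).fst| := by
        rw [abs_sub_comm]; exact le_abs_self _
      have e2 : (α s).fst - (α t).fst ≤ |(α s).fst - (α t).fst| := le_abs_self _
      have e3 : (α b).fst - (α t).fst ≤ |(α t).fst - (α b).fst| := by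
        rw [abs_sub_comm]; exact le_abs_self _
      have f1 : (α s).snd - (α a).snd ≤ |(α a).snd - (α s).snd| := by
        rw [abs_sub_comm]; exact le_abs_self _
      have f2 : (α t).snd - (α s).snd ≤ |(α s).snd - (α t).snd| := by
        rw [abs_sub_comm]; exact le_abs_self _
      have f3 : (α b).snd - (α t).snd ≤ |(α t).snd - (α b).snd| := by
        rw [abs_sub_comm]; exact le_abs_self _
      have g1 : |(α a).fst - (α b).fst| = (α b).fst - (α a).fst := by
        rw [abs_sub_comm]; exact abs_of_nonneg (by linarith)
      have g2 : |(α a).snd - (α b).snd| = (α b).snd - (α a).snd := by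
        rw [abs_sub_comm]; exact abs_of_nonneg (by linarith)
      rw [g1, g2] at key
      linarith
    · intro s hs t ht hst
      by_contra hlt
      push_neg at hlt
      have key := partition_le a b α heq hs ht hst
      rw [dist_M1, dist_M1, dist_M1, dist_M1] at key
      have hlt' : (α t).snd < (α s).snd := hlt
      have e1 : (α s).snd - (α a).snd ≤ |(α a).snd - (α s).snd| := by
        rw [abs_sub_comm]; exact le_abs_self _
      have e2 : (α s).snd - (α t).snd ≤ |(α s).snd - (α t).snd| := le_abs_self _
      have e3 : (α b).snd - (α t).snd ≤ |(α t).snd - (α b).snd| := by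
        rw [abs_sub_comm]; exact le_abs_self _
      have f1 : (α s).fst - (α a).fst ≤ |(α a).fst - (α s).fst| := by
        rw [abs_sub_comm]; exact le_abs_self _
      have f2 : (α t).fst - (α s).fst ≤ |(α s).fst - (α t).fst| := by
        rw [abs_sub_comm]; exact le_abs_self _
      have f3 : (α b).fst - (α t).fst ≤ |(α t).fst - (α b).fst| := by
        rw [abs_sub_comm]; exact le_abs_self _
      have g1 : |(α a).fst - (α b).fst| = (α b).fst - (α a).fst := by
        rw [abs_sub_comm]; exact abs_of_nonneg (by linarith)
      have g2 : |(α a).snd - (α b).snd| = (α b).snd - (α a).snd := by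
        rw [abs_sub_comm]; exact abs_of_nonneg (by linarith)
      rw [g1, g2] at key
      linarith
  · rintro ⟨h1, h2⟩
    have h1' : MonotoneOn (fun t => (α t).fst) (Set.Icc a b) := h1
    have h2' : MonotoneOn (fun t => (α t).snd) (Set.Icc a b) := h2
    apply le_antisymm
    · apply iSup_le
      rintro ⟨n, u, hu, hus⟩
      have step : ∀ i, i < n → edist (α (u (i+1))) (α (u i)) =
          ENNReal.ofReal (((α (u (i+1))).fst - (α (u i)).fst)
            + ((α (u (i+1))).snd - (α (u i)).snd)) := by
        intro i _
        rw [edist_dist, dist_M1]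
        congr 1
        have hfle := h1' (hus i) (hus (i+1)) (hu (Nat.le_succ i))
        have hsle := h2' (hus i) (hus (i+1)) (hu (Nat.le_succ i))
        rw [abs_of_nonneg (by dsimp at hfle; linarith),
          abs_of_nonneg (by dsimp at hsle; linarith)]
      calc (∑ i ∈ Finset.range n, edist (α (u (i + 1))) (α (u i)))
          = ENNReal.ofReal (∑ i ∈ Finset.range n,
            (((α (u (i+1))).fst - (α (u i)).fst) + ((α (u (i+1))).snd - (α (u i)).snd))) := by
            rw [ENNReal.ofReal_sum_of_nonneg]
            · apply Finset.sum_congr rfl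
              intro i hi
              exact step i (Finset.mem_range.mp hi)
            · intro i hi
              have hi' := Finset.mem_range.mp hi
              have hfle := h1' (hus i) (hus (i+1)) (hu (Nat.le_succ i))
              have hsle := h2' (hus i) (hus (i+1)) (hu (Nat.le_succ i))
              dsimp at hfle hsle; linarith
        _ ≤ ENNReal.ofReal (dist (α a) (α b)) := by
            apply ENNReal.ofReal_le_ofReal
            rw [Finset.sum_add_distrib, Finset.sum_range_sub (fun i => (α (u i)).fst),
              Finset.sum_range_sub (fun i => (α (u i)).snd), dist_M1,
              abs_of_nonpos (by linarith), abs_of_nonpos (by linarith)]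
            have hab' : a ∈ Set.Icc a b := ⟨le_refl a, hab⟩
            have hbb : b ∈ Set.Icc a b := ⟨hab, le_refl b⟩
            have l1 := h1' hab' (hus 0) (hus 0).1
            have l2 := h1' (hus n) hbb (hus n).2
            have l3 := h2' hab' (hus 0) (hus 0).1
            have l4 := h2' (hus n) hbb (hus n).2
            dsimp at l1 l2 l3 l4
            linarith
    · rw [← edist_dist]
      exact eVariationOn.edist_le α ⟨le_refl a, hab⟩ ⟨hab, le_refl b⟩
end

section
/- Let A ⊆ ℝ² be finite and nonempty, let (a,b) ∈ A be a point with minimal ordinate (and among those, minimal abscissa), and suppose there exist points (x1,y1) ∈ A with y1 > b, x1 ≥ a, and (x2,y2) ∈ A with y2 > b, x2 ≤ a. Let t = min{ max{y - b : (x,y) ∈ A, y > b, x ≥ a}, max{y - b : (x,y) ∈ A, y > b, x ≤ a} } and let p = (a, b+t). Then every one of the four closed quadrants of p contains a point of A, and consequently the function f_p(q) = d1(p,q) on A satisfies: for every u ∈ A there exists v ∈ A with f_p(u) + f_p(v) = d1(u,v). -/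
/-- The Manhattan metric on `ℝ²`. -/
def d1 (p q : ℝ × ℝ) : ℝ := |p.1 - q.1| + |p.2 - q.2|

lemma abs_split (x c y : ℝ) (h : (x ≤ c ∧ c ≤ y) ∨ (y ≤ c ∧ c ≤ x)) :
    |x - c| + |c - y| = |x - y| := by
  rcases h with ⟨h1, h2⟩ | ⟨h1, h2⟩
  · rw [abs_of_nonpos (by linarith), abs_of_nonpos (by linarith),
      abs_of_nonpos (by linarith)]; ring
  · rw [abs_of_nonneg (by linarith), abs_of_nonneg (by linarith),
      abs_of_nonneg (by linarith)]; ring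

/-- Case (i) of Step 3 of the tight-span algorithm.  Let `(a,b) ∈ A` have minimal ordinate
(and among those minimal abscissa), and suppose there are points of `A` strictly above `b`
both with abscissa `≥ a` and with abscissa `≤ a`.  With
`t = min (max {y - b : (x,y) ∈ A, y > b, x ≥ a}) (max {y - b : (x,y) ∈ A, y > b, x ≤ a})`
and `p = (a, b + t)`, every closed quadrant of `p` contains a point of `A`, and consequently
for every `u ∈ A` there is `v ∈ A` with `d₁(p,u) + d₁(p,v) = d₁(u,v)`. -/
theorem spine_step_vertical
    (A : Set (ℝ × ℝ)) (hfin : A.Finite) (hne : A.Nonempty)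
    (a b : ℝ) (hab : (a, b) ∈ A)
    (hmin : ∀ q ∈ A, b ≤ q.2)
    (hminx : ∀ q ∈ A, q.2 = b → a ≤ q.1)
    (h₁ : ∃ q ∈ A, b < q.2 ∧ a ≤ q.1)
    (h₂ : ∃ q ∈ A, b < q.2 ∧ q.1 ≤ a) :
    (sSup {d : ℝ | ∃ q ∈ A, b < q.2 ∧ a ≤ q.1 ∧ d = q.2 - b}) ⊓
        (sSup {d : ℝ | ∃ q ∈ A, b < q.2 ∧ q.1 ≤ a ∧ d = q.2 - b}) = t →
    ((∃ q ∈ A, a ≤ q.1 ∧ b + t ≤ q.2) ∧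
     (∃ q ∈ A, a ≤ q.1 ∧ q.2 ≤ b + t) ∧
     (∃ q ∈ A, q.1 ≤ a ∧ b + t ≤ q.2) ∧
     (∃ q ∈ A, q.1 ≤ a ∧ q.2 ≤ b + t)) ∧
    ∀ u ∈ A, ∃ v ∈ A, d1 (a, b + t) u + d1 (a, b + t) v = d1 u v := by
  intro ht
  set S₁ : Set ℝ := {d : ℝ | ∃ q ∈ A, b < q.2 ∧ a ≤ q.1 ∧ d = q.2 - b} with hS₁def
  set S₂ : Set ℝ := {d : ℝ | ∃ q ∈ A, b < q.2 ∧ q.1 ≤ a ∧ d = q.2 - b} with hS₂def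
  have hsub₁ : S₁ ⊆ (fun q : ℝ × ℝ => q.2 - b) '' A := by
    rintro d ⟨q, hq, _, _, rfl⟩; exact ⟨q, hq, rfl⟩
  have hsub₂ : S₂ ⊆ (fun q : ℝ × ℝ => q.2 - b) '' A := by
    rintro d ⟨q, hq, _, _, rfl⟩; exact ⟨q, hq, rfl⟩
  have hfin₁ : S₁.Finite := (hfin.image _).subset hsub₁
  have hfin₂ : S₂.Finite := (hfin.image _).subset hsub₂
  obtain ⟨w₁, hw₁A, hw₁b, hw₁a⟩ := h₁
  obtain ⟨w₂, hw₂A, hw₂b, hw₂a⟩ := h₂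
  have hne₁ : S₁.Nonempty := ⟨w₁.2 - b, w₁, hw₁A, hw₁b, hw₁a, rfl⟩
  have hne₂ : S₂.Nonempty := ⟨w₂.2 - b, w₂, hw₂A, hw₂b, hw₂a, rfl⟩
  obtain ⟨q₁, hq₁A, hq₁b, hq₁a, hq₁s⟩ := hne₁.csSup_mem hfin₁
  obtain ⟨q₂, hq₂A, hq₂b, hq₂a, hq₂s⟩ := hne₂.csSup_mem hfin₂
  have ht₁ : t ≤ sSup S₁ := ht ▸ min_le_left _ _
  have ht₂ : t ≤ sSup S₂ := ht ▸ min_le_right _ _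
  have hpos₁ : 0 < sSup S₁ :=
    lt_of_lt_of_le (by linarith) (le_csSup hfin₁.bddAbove ⟨w₁, hw₁A, hw₁b, hw₁a, rfl⟩)
  have hpos₂ : 0 < sSup S₂ :=
    lt_of_lt_of_le (by linarith) (le_csSup hfin₂.bddAbove ⟨w₂, hw₂A, hw₂b, hw₂a, rfl⟩)
  have htpos : 0 < t := by rw [← ht]; exact lt_min hpos₁ hpos₂
  have hq₁t : b + t ≤ q₁.2 := by linarith [hq₁s ▸ ht₁]
  have hq₂t : b + t ≤ q₂.2 := by linarith [hq₂s ▸ ht₂]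
  refine ⟨⟨⟨q₁, hq₁A, hq₁a, hq₁t⟩, ⟨(a, b), hab, le_refl a, by simp; linarith⟩,
    ⟨q₂, hq₂A, hq₂a, hq₂t⟩, ⟨(a, b), hab, le_refl a, by simp; linarith⟩⟩, ?_⟩
  intro u huA
  have key : ∀ v ∈ A, ((u.1 ≤ a ∧ a ≤ v.1) ∨ (v.1 ≤ a ∧ a ≤ u.1)) →
      ((u.2 ≤ b + t ∧ b + t ≤ v.2) ∨ (v.2 ≤ b + t ∧ b + t ≤ u.2)) →
      d1 (a, b + t) u + d1 (a, b + t) v = d1 u v := by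
    intro v hvA hx hy
    simp only [d1]
    rw [abs_sub_comm a u.1, abs_sub_comm (b + t) u.2]
    have e1 := abs_split u.1 a v.1 hx
    have e2 := abs_split u.2 (b + t) v.2 hy
    linarith
  rcases le_total u.1 a with hux | hux <;> rcases le_total u.2 (b + t) with huy | huy
  · exact ⟨q₁, hq₁A, key q₁ hq₁A (Or.inl ⟨hux, hq₁a⟩) (Or.inl ⟨huy, hq₁t⟩)⟩
  · exact ⟨(a, b), hab, key (a, b) hab (Or.inl ⟨hux, le_refl a⟩) (Or.inr ⟨by simp; linarith, huy⟩)⟩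
  · exact ⟨q₂, hq₂A, key q₂ hq₂A (Or.inr ⟨hq₂a, hux⟩) (Or.inl ⟨huy, hq₂t⟩)⟩
  · exact ⟨(a, b), hab, key (a, b) hab (Or.inr ⟨le_refl a, hux⟩) (Or.inr ⟨by simp; linarith, huy⟩)⟩
end

section
/- Let A ⊆ ℝ² be path connected (in the standard topology of ℝ²). Then the horizontal hatching L_x(A) = ⋃_{y ∈ ℝ}[A^y] is path connected, and similarly the vertical hatching L_y(A) = ⋃_{x ∈ ℝ}[A_x] is path connected. -/
/-- Horizontal hatching of `A ⊆ ℝ²`. -/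
def Lx (A : Set (ℝ × ℝ)) : Set (ℝ × ℝ) :=
  ⋃ y : ℝ, convexHull ℝ {p ∈ A | p.2 = y}

/-- Vertical hatching of `A ⊆ ℝ²`. -/
def Ly (A : Set (ℝ × ℝ)) : Set (ℝ × ℝ) :=
  ⋃ x : ℝ, convexHull ℝ {p ∈ A | p.1 = x}

lemma hatching_aux (A : Set (ℝ × ℝ)) (hA : IsPathConnected A) (f : ℝ × ℝ → ℝ) :
    IsPathConnected (⋃ y : ℝ, convexHull ℝ {p ∈ A | f p = y}) := by
  obtain ⟨b, hbA, hb⟩ := hA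
  set L := ⋃ y : ℝ, convexHull ℝ {p ∈ A | f p = y} with hL
  have hsub : A ⊆ L := fun a ha =>
    Set.mem_iUnion.2 ⟨f a, subset_convexHull ℝ _ ⟨ha, rfl⟩⟩
  refine ⟨b, hsub hbA, ?_⟩
  intro x hx
  rw [hL, Set.mem_iUnion] at hx
  obtain ⟨y, hy⟩ := hx
  have hne : ({p ∈ A | f p = y}).Nonempty := convexHull_nonempty_iff.1 ⟨x, hy⟩
  obtain ⟨a, haA, hay⟩ := hne
  have hba : JoinedIn A b a := hb haA
  have hax : JoinedIn (convexHull ℝ {p ∈ A | f p = y}) a x :=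
    ((convex_convexHull ℝ _).isPathConnected ⟨x, hy⟩).joinedIn a
      (subset_convexHull ℝ _ ⟨haA, hay⟩) x hy
  exact (hba.mono hsub).trans (hax.mono (Set.subset_iUnion (fun y => convexHull ℝ {p ∈ A | f p = y}) y))

/-- If `A ⊆ ℝ²` is path connected, then both its horizontal hatching `Lx A` and its
vertical hatching `Ly A` are path connected. -/
theorem hatching_pathConnected (A : Set (ℝ × ℝ)) (hA : IsPathConnected A) :
    IsPathConnected (Lx A) ∧ IsPathConnected (Ly A) := by
  exact ⟨hatching_aux A hA Prod.snd, hatching_aux A hA Prod.fst⟩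
end

section
/- For a path connected subset A ⊆ ℝ², the hatching operations commute: L_x(L_y(A)) = L_y(L_x(A)). -/
lemma mem_Lx {A : Set (ℝ × ℝ)} {p : ℝ × ℝ} :
    p ∈ Lx A ↔ ∃ a ∈ A, ∃ b ∈ A, a.2 = p.2 ∧ b.2 = p.2 ∧ a.1 ≤ p.1 ∧ p.1 ≤ b.1 := by
  constructor
  · intro hp
    rw [Lx, Set.mem_iUnion] at hp
    obtain ⟨y, hy⟩ := hp
    have hT : convexHull ℝ {q ∈ A | q.2 = y} ⊆
        {q : ℝ × ℝ | q.2 = y ∧ ∃ a ∈ A, ∃ b ∈ A, a.2 = y ∧ b.2 = y ∧ a.1 ≤ q.1 ∧ q.1 ≤ b.1} := by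
      apply convexHull_min
      · intro q hq
        exact ⟨hq.2, q, hq.1, q, hq.1, hq.2, hq.2, le_refl _, le_refl _⟩
      · rintro q ⟨hqy, aq, haq, bq, hbq, haq2, hbq2, haq1, hbq1⟩
          r ⟨hry, ar, har, br, hbr, har2, hbr2, har1, hbr1⟩ u v hu hv huv
        have h2 : (u • q + v • r).2 = y := by
          have : (u • q + v • r).2 = u * q.2 + v * r.2 := rfl
          rw [this, hqy, hry]; linear_combination y * huv
        have h1 : (u • q + v • r).1 = u * q.1 + v * r.1 := rfl
        obtain ⟨al, hal, hal2, halq, halr⟩ :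
            ∃ al ∈ A, al.2 = y ∧ al.1 ≤ q.1 ∧ al.1 ≤ r.1 := by
          rcases le_total aq.1 ar.1 with h | h
          · exact ⟨aq, haq, haq2, haq1, h.trans har1⟩
          · exact ⟨ar, har, har2, h.trans haq1, har1⟩
        obtain ⟨bl, hbl, hbl2, hblq, hblr⟩ :
            ∃ bl ∈ A, bl.2 = y ∧ q.1 ≤ bl.1 ∧ r.1 ≤ bl.1 := by
          rcases le_total bq.1 br.1 with h | h
          · exact ⟨br, hbr, hbr2, hbq1.trans h, hbr1⟩
          · exact ⟨bq, hbq, hbq2, hbq1, hbr1.trans h⟩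
        refine ⟨h2, al, hal, bl, hbl, hal2, hbl2, ?_, ?_⟩
        · rw [h1]
          have e : u * al.1 + v * al.1 = al.1 := by linear_combination al.1 * huv
          linarith [mul_nonneg hu (sub_nonneg.2 halq), mul_nonneg hv (sub_nonneg.2 halr)]
        · rw [h1]
          have e : u * bl.1 + v * bl.1 = bl.1 := by linear_combination bl.1 * huv
          linarith [mul_nonneg hu (sub_nonneg.2 hblq), mul_nonneg hv (sub_nonneg.2 hblr)]
    obtain ⟨hpy, a, ha, b, hb, ha2, hb2, h1, h2⟩ := hT hy
    exact ⟨a, ha, b, hb, by rw [ha2, hpy], by rw [hb2, hpy], h1, h2⟩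
  · rintro ⟨a, ha, b, hb, ha2, hb2, h1, h2⟩
    rw [Lx, Set.mem_iUnion]
    refine ⟨p.2, ?_⟩
    have haS : a ∈ {q ∈ A | q.2 = p.2} := ⟨ha, ha2⟩
    have hbS : b ∈ {q ∈ A | q.2 = p.2} := ⟨hb, hb2⟩
    apply segment_subset_convexHull haS hbS
    rcases eq_or_lt_of_le (le_trans h1 h2) with h | h
    · have hpa : a = p := by
        have h3 : a.1 = p.1 := le_antisymm h1 (by rw [h]; exact h2)
        exact Prod.ext h3 ha2
      rw [← hpa]; exact left_mem_segment ℝ a b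
    · set t : ℝ := (p.1 - a.1) / (b.1 - a.1) with ht
      have hab : b.1 - a.1 > 0 := by linarith
      have ht0 : 0 ≤ t := div_nonneg (by linarith) (by linarith)
      have ht1 : t ≤ 1 := by rw [div_le_one hab]; linarith
      refine ⟨1 - t, t, by linarith, ht0, by ring, ?_⟩
      have e1 : ((1 - t) • a + t • b).1 = (1 - t) * a.1 + t * b.1 := rfl
      have e2 : ((1 - t) • a + t • b).2 = (1 - t) * a.2 + t * b.2 := rfl
      refine Prod.ext ?_ ?_
      · rw [e1, ht]; field_simp; ring
      · rw [e2, ha2, hb2]; ring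

lemma mem_Ly {A : Set (ℝ × ℝ)} {p : ℝ × ℝ} :
    p ∈ Ly A ↔ ∃ a ∈ A, ∃ b ∈ A, a.1 = p.1 ∧ b.1 = p.1 ∧ a.2 ≤ p.2 ∧ p.2 ≤ b.2 := by
  constructor
  · intro hp
    rw [Ly, Set.mem_iUnion] at hp
    obtain ⟨x, hx⟩ := hp
    have hT : convexHull ℝ {q ∈ A | q.1 = x} ⊆
        {q : ℝ × ℝ | q.1 = x ∧ ∃ a ∈ A, ∃ b ∈ A, a.1 = x ∧ b.1 = x ∧ a.2 ≤ q.2 ∧ q.2 ≤ b.2} := by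
      apply convexHull_min
      · intro q hq
        exact ⟨hq.2, q, hq.1, q, hq.1, hq.2, hq.2, le_refl _, le_refl _⟩
      · rintro q ⟨hqy, aq, haq, bq, hbq, haq2, hbq2, haq1, hbq1⟩
          r ⟨hry, ar, har, br, hbr, har2, hbr2, har1, hbr1⟩ u v hu hv huv
        have h2 : (u • q + v • r).1 = x := by
          have : (u • q + v • r).1 = u * q.1 + v * r.1 := rfl
          rw [this, hqy, hry]; linear_combination x * huv
        have h1 : (u • q + v • r).2 = u * q.2 + v * r.2 := rfl
        obtain ⟨al, hal, hal2, halq, halr⟩ :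
            ∃ al ∈ A, al.1 = x ∧ al.2 ≤ q.2 ∧ al.2 ≤ r.2 := by
          rcases le_total aq.2 ar.2 with h | h
          · exact ⟨aq, haq, haq2, haq1, h.trans har1⟩
          · exact ⟨ar, har, har2, h.trans haq1, har1⟩
        obtain ⟨bl, hbl, hbl2, hblq, hblr⟩ :
            ∃ bl ∈ A, bl.1 = x ∧ q.2 ≤ bl.2 ∧ r.2 ≤ bl.2 := by
          rcases le_total bq.2 br.2 with h | h
          · exact ⟨br, hbr, hbr2, hbq1.trans h, hbr1⟩
          · exact ⟨bq, hbq, hbq2, hbq1, hbr1.trans h⟩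
        refine ⟨h2, al, hal, bl, hbl, hal2, hbl2, ?_, ?_⟩
        · rw [h1]
          have e : u * al.2 + v * al.2 = al.2 := by linear_combination al.2 * huv
          linarith [mul_nonneg hu (sub_nonneg.2 halq), mul_nonneg hv (sub_nonneg.2 halr)]
        · rw [h1]
          have e : u * bl.2 + v * bl.2 = bl.2 := by linear_combination bl.2 * huv
          linarith [mul_nonneg hu (sub_nonneg.2 hblq), mul_nonneg hv (sub_nonneg.2 hblr)]
    obtain ⟨hpx, a, ha, b, hb, ha1, hb1, h1, h2⟩ := hT hx
    exact ⟨a, ha, b, hb, by rw [ha1, hpx], by rw [hb1, hpx], h1, h2⟩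
  · rintro ⟨a, ha, b, hb, ha1, hb1, h1, h2⟩
    rw [Ly, Set.mem_iUnion]
    refine ⟨p.1, ?_⟩
    have haS : a ∈ {q ∈ A | q.1 = p.1} := ⟨ha, ha1⟩
    have hbS : b ∈ {q ∈ A | q.1 = p.1} := ⟨hb, hb1⟩
    apply segment_subset_convexHull haS hbS
    rcases eq_or_lt_of_le (le_trans h1 h2) with h | h
    · have hpa : a = p := by
        have h3 : a.2 = p.2 := le_antisymm h1 (by rw [h]; exact h2)
        exact Prod.ext ha1 h3
      rw [← hpa]; exact left_mem_segment ℝ a b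
    · set t : ℝ := (p.2 - a.2) / (b.2 - a.2) with ht
      have hab : b.2 - a.2 > 0 := by linarith
      have ht0 : 0 ≤ t := div_nonneg (by linarith) (by linarith)
      have ht1 : t ≤ 1 := by rw [div_le_one hab]; linarith
      refine ⟨1 - t, t, by linarith, ht0, by ring, ?_⟩
      have e1 : ((1 - t) • a + t • b).1 = (1 - t) * a.1 + t * b.1 := rfl
      have e2 : ((1 - t) • a + t • b).2 = (1 - t) * a.2 + t * b.2 := rfl
      refine Prod.ext ?_ ?_
      · rw [e1, ha1, hb1]; ring
      · rw [e2, ht]; field_simp; ring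

/-- Key lemma: if a path connected set contains points `a` (weakly left of `x`) and `b`
(weakly right of `x`), both weakly above height `y`, then there are two points of the set
at a common height `≥ y`, one weakly left of `x` and one weakly right of `x`. -/
lemma key {A : Set (ℝ × ℝ)} (hA : IsPathConnected A) {x y : ℝ} {a b : ℝ × ℝ}
    (ha : a ∈ A) (hb : b ∈ A) (hay : y ≤ a.2) (hby : y ≤ b.2)
    (hax : a.1 ≤ x) (hbx : x ≤ b.1) :
    ∃ u ∈ A, ∃ v ∈ A, u.2 = v.2 ∧ y ≤ u.2 ∧ u.1 ≤ x ∧ x ≤ v.1 := by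
  obtain ⟨γ, hγA⟩ := hA.joinedIn a ha b hb
  set F : ℝ → ℝ × ℝ := ⇑γ.extend with hFdef
  have hF : Continuous F := γ.continuous_extend
  have hF1 : Continuous fun t => (F t).1 := hF.fst
  have hF2 : Continuous fun t => (F t).2 := hF.snd
  have hFmem : ∀ t ∈ Set.Icc (0:ℝ) 1, F t ∈ A := by
    intro t ht
    rw [hFdef, γ.extend_apply ht]
    exact hγA _
  have hF0 : F 0 = a := γ.extend_zero
  have hFone : F 1 = b := γ.extend_one
  by_cases hc : ∃ t ∈ Set.Icc (0:ℝ) 1, (F t).1 = x ∧ y ≤ (F t).2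
  · obtain ⟨t, ht, htx, hty⟩ := hc
    exact ⟨F t, hFmem t ht, F t, hFmem t ht, rfl, hty, le_of_eq htx, le_of_eq htx.symm⟩
  push_neg at hc
  -- the set of times at which the path is on the vertical line through x
  set Z : Set ℝ := Set.Icc (0:ℝ) 1 ∩ {t | (F t).1 = x} with hZdef
  have hZne : Z.Nonempty := by
    have : x ∈ (fun t => (F t).1) '' Set.Icc 0 1 := by
      apply intermediate_value_Icc zero_le_one hF1.continuousOn
      rw [hF0, hFone]; exact ⟨hax, hbx⟩
    obtain ⟨t, ht, htx⟩ := this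
    exact ⟨t, ht, htx⟩
  have hZclosed : IsClosed Z := isClosed_Icc.inter (isClosed_eq hF1 continuous_const)
  have hZbdd_below : BddBelow Z := ⟨0, fun t ht => ht.1.1⟩
  have hZbdd_above : BddAbove Z := ⟨1, fun t ht => ht.1.2⟩
  set t₁ := sInf Z with ht₁def
  set t₂ := sSup Z with ht₂def
  have ht₁Z : t₁ ∈ Z := hZclosed.csInf_mem hZne hZbdd_below
  have ht₂Z : t₂ ∈ Z := hZclosed.csSup_mem hZne hZbdd_above
  -- before t₁ the path stays (weakly) left of x
  have hleft : ∀ t ∈ Set.Icc (0:ℝ) t₁, (F t).1 ≤ x := by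
    intro t ht
    by_contra hgt
    push_neg at hgt
    have htne : t ≠ t₁ := by
      intro h; rw [h] at hgt; exact absurd ht₁Z.2 (ne_of_gt hgt)
    have htlt : t < t₁ := lt_of_le_of_ne ht.2 htne
    have : x ∈ (fun s => (F s).1) '' Set.Icc 0 t := by
      apply intermediate_value_Icc ht.1 hF1.continuousOn
      rw [hF0]; exact ⟨hax, le_of_lt hgt⟩
    obtain ⟨s, hs, hsx⟩ := this
    have hsZ : s ∈ Z := ⟨⟨hs.1, le_trans hs.2 (le_trans ht.2 ht₁Z.1.2)⟩, hsx⟩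
    have : t₁ ≤ s := csInf_le hZbdd_below hsZ
    linarith [hs.2]
  -- after t₂ the path stays (weakly) right of x
  have hright : ∀ t ∈ Set.Icc t₂ (1:ℝ), x ≤ (F t).1 := by
    intro t ht
    by_contra hgt
    push_neg at hgt
    have htne : t ≠ t₂ := by
      intro h; rw [h] at hgt; exact absurd ht₂Z.2.symm (ne_of_gt hgt)
    have htlt : t₂ < t := lt_of_le_of_ne ht.1 (Ne.symm htne)
    have : x ∈ (fun s => (F s).1) '' Set.Icc t 1 := by
      apply intermediate_value_Icc ht.2 hF1.continuousOn
      rw [hFone]; exact ⟨le_of_lt hgt, hbx⟩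
    obtain ⟨s, hs, hsx⟩ := this
    have hsZ : s ∈ Z := ⟨⟨le_trans (le_trans ht₂Z.1.1 ht.1) hs.1, hs.2⟩, hsx⟩
    have : s ≤ t₂ := le_csSup hZbdd_above hsZ
    linarith [hs.1]
  -- the path dips below y at t₁ and t₂
  have hgt₁ : (F t₁).2 < y := hc t₁ ht₁Z.1 ht₁Z.2
  have hgt₂ : (F t₂).2 < y := hc t₂ ht₂Z.1 ht₂Z.2
  -- find u on the left and v on the right, both at height exactly y
  obtain ⟨s, hs, hsy⟩ : ∃ s ∈ Set.Icc (0:ℝ) t₁, (F s).2 = y := by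
    have : y ∈ (fun s => (F s).2) '' Set.Icc 0 t₁ := by
      apply intermediate_value_Icc' ht₁Z.1.1 hF2.continuousOn
      rw [hF0]; exact ⟨le_of_lt hgt₁, hay⟩
    obtain ⟨s, hs, hsy⟩ := this
    exact ⟨s, hs, hsy⟩
  obtain ⟨s', hs', hsy'⟩ : ∃ s' ∈ Set.Icc t₂ (1:ℝ), (F s').2 = y := by
    have : y ∈ (fun s => (F s).2) '' Set.Icc t₂ 1 := by
      apply intermediate_value_Icc ht₂Z.1.2 hF2.continuousOn
      rw [hFone]; exact ⟨le_of_lt hgt₂, hby⟩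
    obtain ⟨s', hs', hsy'⟩ := this
    exact ⟨s', hs', hsy'⟩
  exact ⟨F s, hFmem s ⟨hs.1, le_trans hs.2 ht₁Z.1.2⟩,
    F s', hFmem s' ⟨le_trans ht₂Z.1.1 hs'.1, hs'.2⟩,
    by rw [hsy, hsy'], le_of_eq hsy.symm, hleft s hs, hright s' hs'⟩

/-- Reflected version of `key`, for points weakly below height `y`. -/
lemma key' {A : Set (ℝ × ℝ)} (hA : IsPathConnected A) {x y : ℝ} {a b : ℝ × ℝ}
    (ha : a ∈ A) (hb : b ∈ A) (hay : a.2 ≤ y) (hby : b.2 ≤ y)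
    (hax : a.1 ≤ x) (hbx : x ≤ b.1) :
    ∃ u ∈ A, ∃ v ∈ A, u.2 = v.2 ∧ u.2 ≤ y ∧ u.1 ≤ x ∧ x ≤ v.1 := by
  set N : ℝ × ℝ → ℝ × ℝ := fun p => (p.1, -p.2) with hN
  have hNc : Continuous N := continuous_fst.prodMk continuous_snd.neg
  have hA' : IsPathConnected (N '' A) := hA.image hNc
  obtain ⟨u', hu', v', hv', heq, hy', h1, h2⟩ :=
    key hA' (x := x) (y := -y) (Set.mem_image_of_mem N ha) (Set.mem_image_of_mem N hb)
      (neg_le_neg hay) (neg_le_neg hby) hax hbx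
  obtain ⟨u, hu, rfl⟩ := hu'
  obtain ⟨v, hv, rfl⟩ := hv'
  refine ⟨u, hu, v, hv, ?_, ?_, h1, h2⟩
  · have : -u.2 = -v.2 := heq
    linarith
  · have : -y ≤ -u.2 := hy'
    linarith

lemma subLxLy {A : Set (ℝ × ℝ)} (hA : IsPathConnected A) : Lx (Ly A) ⊆ Ly (Lx A) := by
  intro p hp
  rw [mem_Lx] at hp
  obtain ⟨a, haL, b, hbL, ha2, hb2, hax, hbx⟩ := hp
  rw [mem_Ly] at haL hbL
  obtain ⟨am, ham, ap, hap, ham1, hap1, ham2, hap2⟩ := haL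
  obtain ⟨bm, hbm, bp, hbp, hbm1, hbp1, hbm2, hbp2⟩ := hbL
  -- upper point
  obtain ⟨u, hu, v, hv, huv, huy, hu1, hv1⟩ :=
    key hA (x := p.1) (y := p.2) hap hbp (ha2 ▸ hap2) (hb2 ▸ hbp2)
      (hap1 ▸ hax) (hbp1 ▸ hbx)
  have hd : ((p.1, u.2) : ℝ × ℝ) ∈ Lx A :=
    mem_Lx.2 ⟨u, hu, v, hv, rfl, huv.symm, hu1, hv1⟩
  -- lower point
  obtain ⟨u', hu', v', hv', huv', huy', hu1', hv1'⟩ :=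
    key' hA (x := p.1) (y := p.2) ham hbm (ha2 ▸ ham2) (hb2 ▸ hbm2)
      (ham1 ▸ hax) (hbm1 ▸ hbx)
  have hc : ((p.1, u'.2) : ℝ × ℝ) ∈ Lx A :=
    mem_Lx.2 ⟨u', hu', v', hv', rfl, huv'.symm, hu1', hv1'⟩
  rw [mem_Ly]
  exact ⟨(p.1, u'.2), hc, (p.1, u.2), hd, rfl, rfl, huy', huy⟩

lemma Lx_image_swap (A : Set (ℝ × ℝ)) : Lx (Prod.swap '' A) = Prod.swap '' Ly A := by
  ext p
  constructor
  · intro hp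
    rw [mem_Lx] at hp
    obtain ⟨a, ⟨a', ha', rfl⟩, b, ⟨b', hb', rfl⟩, h1, h2, h3, h4⟩ := hp
    exact ⟨p.swap, mem_Ly.2 ⟨a', ha', b', hb', h1, h2, h3, h4⟩, Prod.swap_swap p⟩
  · rintro ⟨q, hq, rfl⟩
    rw [mem_Ly] at hq
    obtain ⟨a, ha, b, hb, h1, h2, h3, h4⟩ := hq
    exact mem_Lx.2 ⟨a.swap, ⟨a, ha, rfl⟩, b.swap, ⟨b, hb, rfl⟩, h1, h2, h3, h4⟩

lemma Ly_image_swap (A : Set (ℝ × ℝ)) : Ly (Prod.swap '' A) = Prod.swap '' Lx A := by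
  ext p
  constructor
  · intro hp
    rw [mem_Ly] at hp
    obtain ⟨a, ⟨a', ha', rfl⟩, b, ⟨b', hb', rfl⟩, h1, h2, h3, h4⟩ := hp
    exact ⟨p.swap, mem_Lx.2 ⟨a', ha', b', hb', h1, h2, h3, h4⟩, Prod.swap_swap p⟩
  · rintro ⟨q, hq, rfl⟩
    rw [mem_Lx] at hq
    obtain ⟨a, ha, b, hb, h1, h2, h3, h4⟩ := hq
    exact mem_Ly.2 ⟨a.swap, ⟨a, ha, rfl⟩, b.swap, ⟨b, hb, rfl⟩, h1, h2, h3, h4⟩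

/-- For a path connected subset `A ⊆ ℝ²`, the hatching operations commute:
`Lx (Ly A) = Ly (Lx A)`. -/
theorem hatching_comm (A : Set (ℝ × ℝ)) (hA : IsPathConnected A) :
    Lx (Ly A) = Ly (Lx A) := by
  apply Set.Subset.antisymm (subLxLy hA)
  have hA' : IsPathConnected (Prod.swap '' A) := hA.image continuous_swap
  have h := subLxLy hA'
  rw [Ly_image_swap, Lx_image_swap] at h
  rw [Lx_image_swap, Ly_image_swap] at h
  intro p hp
  have hps : p.swap ∈ Prod.swap '' Ly (Lx A) := ⟨p, hp, rfl⟩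
  obtain ⟨q, hq, hqp⟩ := h hps
  have hqeq : q = p := by
    have := congrArg Prod.swap hqp
    rwa [Prod.swap_swap, Prod.swap_swap] at this
  rwa [← hqeq]
end

section
/- Let A = {(-1,0), (0,-2), (3/2,1)} ⊆ ℝ² with the d1 metric. Then the orthogonal hull of A, defined as the set of points p ∈ ℝ² such that every closed quadrant of p contains a point of A, is not path connected. -/
/-- The orthogonal hull of `A ⊆ ℝ²`: the set of points `p` such that each of the four closed
quadrants of `p` contains a point of `A`. -/
def orthogonalHull (A : Set (ℝ × ℝ)) : Set (ℝ × ℝ) :=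
  {p : ℝ × ℝ |
    (∃ q ∈ A, p.1 ≤ q.1 ∧ p.2 ≤ q.2) ∧
    (∃ q ∈ A, p.1 ≤ q.1 ∧ q.2 ≤ p.2) ∧
    (∃ q ∈ A, q.1 ≤ p.1 ∧ p.2 ≤ q.2) ∧
    (∃ q ∈ A, q.1 ≤ p.1 ∧ q.2 ≤ p.2)}

lemma no_half (p : ℝ × ℝ)
    (hp : p ∈ orthogonalHull {((-1 : ℝ), (0 : ℝ)), ((0 : ℝ), (-2 : ℝ)), ((3/2 : ℝ), (1 : ℝ))}) :
    p.2 ≠ 1/2 := by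
  intro hy
  obtain ⟨-, ⟨q1, hq1, hx1, hy1⟩, ⟨q2, hq2, hx2, hy2⟩, -⟩ := hp
  simp only [Set.mem_insert_iff, Set.mem_singleton_iff] at hq1 hq2
  -- q2 is the NW witness (q2.1 ≤ p.1, p.2 ≤ q2.2); must be (3/2,1)
  rcases hq2 with h | h | h <;> rcases hq1 with h' | h' | h' <;>
    subst h <;> subst h' <;> simp_all <;> linarith

theorem mem_hull_a :
    ((-1 : ℝ), (0 : ℝ)) ∈
      orthogonalHull {((-1 : ℝ), (0 : ℝ)), ((0 : ℝ), (-2 : ℝ)), ((3/2 : ℝ), (1 : ℝ))} := by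
  refine ⟨⟨((-1:ℝ),(0:ℝ)), ?_⟩, ⟨((-1:ℝ),(0:ℝ)), ?_⟩, ⟨((-1:ℝ),(0:ℝ)), ?_⟩, ⟨((-1:ℝ),(0:ℝ)), ?_⟩⟩ <;>
    simp

theorem mem_hull_c :
    ((3/2 : ℝ), (1 : ℝ)) ∈
      orthogonalHull {((-1 : ℝ), (0 : ℝ)), ((0 : ℝ), (-2 : ℝ)), ((3/2 : ℝ), (1 : ℝ))} := by
  refine ⟨⟨((3/2:ℝ),(1:ℝ)), ?_⟩, ⟨((3/2:ℝ),(1:ℝ)), ?_⟩, ⟨((3/2:ℝ),(1:ℝ)), ?_⟩, ⟨((3/2:ℝ),(1:ℝ)), ?_⟩⟩ <;>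
    simp

/-- For `A = {(-1,0), (0,-2), (3/2,1)}` the orthogonal hull of `A` is not path connected
(the counterexample to Eppstein's Lemma 9 without taking closures). -/
theorem orthogonalHull_not_pathConnected :
    ¬ IsPathConnected
        (orthogonalHull {((-1 : ℝ), (0 : ℝ)), ((0 : ℝ), (-2 : ℝ)), ((3/2 : ℝ), (1 : ℝ))}) := by
  intro h
  have hj : JoinedIn _ ((-1 : ℝ), (0 : ℝ)) ((3/2 : ℝ), (1 : ℝ)) :=
    h.joinedIn _ mem_hull_a _ mem_hull_c
  obtain ⟨γ, hγ⟩ := hj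
  have hcont : Continuous fun t => (γ t).2 := (continuous_snd.comp γ.continuous)
  have : (1/2 : ℝ) ∈ Set.range fun t => (γ t).2 := by
    apply intermediate_value_univ (0 : unitInterval) 1 hcont
    simp [γ.source, γ.target]
    norm_num
  obtain ⟨t, ht⟩ := this
  exact no_half _ (hγ t) ht
end

section
/- The tight span of any metric space (X,d) is itself a metric space under d∞, and the triangle inequality and point separation hold: for f, g ∈ T(X), d∞(f,g) = 0 implies f = g, and moreover for any f ∈ T(X) and p ∈ X, f(p) = d∞(f, e(p)) where e(p) = d(p,·). -/
/-- Membership in the tight span: pointwise minimal nonnegative `f` with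
`f p + f q ≥ d p q`. -/
def IsTight {X : Type*} [MetricSpace X] (f : X → ℝ) : Prop :=
  (∀ p, 0 ≤ f p) ∧ (∀ p q, dist p q ≤ f p + f q) ∧
    ∀ g : X → ℝ, (∀ p, 0 ≤ g p) → (∀ p q, dist p q ≤ g p + g q) →
      (∀ p, g p ≤ f p) → g = f

lemma IsTight.lip {X : Type*} [MetricSpace X] {f : X → ℝ} (hf : IsTight f)
    (p q : X) : f q ≤ f p + dist p q := by
  obtain ⟨h0, hd, hmin⟩ := hf
  set g : X → ℝ := fun x => min (f x) (f p + dist p x) with hg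
  have hg0 : ∀ x, 0 ≤ g x := fun x => le_min (h0 x) (add_nonneg (h0 p) dist_nonneg)
  have hgd : ∀ x y, dist x y ≤ g x + g y := by
    intro x y
    have t1 : dist x y ≤ dist p x + dist p y := by
      rw [dist_comm p x]; exact dist_triangle x p y
    rcases min_cases (f x) (f p + dist p x) with ⟨hx, _⟩ | ⟨hx, _⟩ <;>
      rcases min_cases (f y) (f p + dist p y) with ⟨hy, _⟩ | ⟨hy, _⟩ <;>
        simp only [hg] at hx hy ⊢ <;> rw [hx, hy]
    · exact hd x y
    · linarith [hd p x]
    · linarith [hd p y]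
    · linarith [h0 p]
  have := hmin g hg0 hgd (fun x => min_le_left _ _)
  have hq : g q = f q := congrFun this q
  simp only [hg] at hq
  rw [← hq]
  exact min_le_right _ _

lemma IsTight.abs_sub_le {X : Type*} [MetricSpace X] {f g : X → ℝ}
    (hf : IsTight f) (hg : IsTight g) (x₀ p : X) :
    |f p - g p| ≤ f x₀ + g x₀ := by
  have h1 : f p ≤ f x₀ + dist x₀ p := hf.lip x₀ p
  have h2 : g p ≤ g x₀ + dist x₀ p := hg.lip x₀ p
  have h3 : dist x₀ p ≤ f x₀ + f p := hf.2.1 x₀ p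
  have h4 : dist x₀ p ≤ g x₀ + g p := hg.2.1 x₀ p
  rw [abs_sub_le_iff]; constructor <;> linarith

lemma IsTight.bdd {X : Type*} [MetricSpace X] {f g : X → ℝ}
    (hf : IsTight f) (hg : IsTight g) (x₀ : X) :
    BddAbove (Set.range fun p => |f p - g p|) :=
  ⟨f x₀ + g x₀, by rintro _ ⟨p, rfl⟩; exact hf.abs_sub_le hg x₀ p⟩

/-- The tight span of a metric space is itself a metric space under the sup metric
`d∞(f,g) = sup_p |f p - g p|`: the triangle inequality holds, `d∞(f,g) = 0` implies `f = g`,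
and for `f` in the tight span and `p ∈ X` one has `f p = d∞(f, e p)` where `e p = d(p,·)`. -/
theorem tight_span_metric_space
    {X : Type*} [MetricSpace X] :
    (∀ f g h : X → ℝ, IsTight f → IsTight g → IsTight h →
      (⨆ p : X, |f p - h p|) ≤ (⨆ p : X, |f p - g p|) + ⨆ p : X, |g p - h p|) ∧
    (∀ f g : X → ℝ, IsTight f → IsTight g → (⨆ p : X, |f p - g p|) = 0 → f = g) ∧
    (∀ f : X → ℝ, IsTight f → ∀ p : X, f p = ⨆ q : X, |f q - dist p q|) := by
  refine ⟨?_, ?_, ?_⟩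
  · intro f g h hf hg hh
    rcases isEmpty_or_nonempty X with hX | hX
    · simp [Real.iSup_of_isEmpty]
    obtain ⟨x₀⟩ := hX
    haveI : Nonempty X := ⟨x₀⟩
    refine ciSup_le fun p => ?_
    calc |f p - h p| ≤ |f p - g p| + |g p - h p| := abs_sub_le _ _ _
      _ ≤ (⨆ p : X, |f p - g p|) + ⨆ p : X, |g p - h p| :=
        add_le_add (le_ciSup (hf.bdd hg x₀) p) (le_ciSup (hg.bdd hh x₀) p)
  · intro f g hf hg h0
    funext p
    have h1 : |f p - g p| ≤ 0 := h0 ▸ le_ciSup (hf.bdd hg p) p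
    have := abs_nonneg (f p - g p)
    have : |f p - g p| = 0 := le_antisymm h1 this
    linarith [abs_eq_zero.mp this, sub_eq_zero.mp (abs_eq_zero.mp this)]
  · intro f hf p
    haveI : Nonempty X := ⟨p⟩
    have hb : BddAbove (Set.range fun q => |f q - dist p q|) := by
      refine ⟨f p, ?_⟩
      rintro _ ⟨q, rfl⟩
      have h1 : f q ≤ f p + dist p q := hf.lip p q
      have h2 : dist p q ≤ f p + f q := hf.2.1 p q
      rw [abs_sub_le_iff]; constructor <;> linarith
    refine le_antisymm ?_ ?_
    · have : |f p - dist p p| = f p := by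
        simp [abs_of_nonneg (hf.1 p)]
      calc f p = |f p - dist p p| := this.symm
        _ ≤ _ := le_ciSup hb p
    · refine ciSup_le fun q => ?_
      have h1 : f q ≤ f p + dist p q := hf.lip p q
      have h2 : dist p q ≤ f p + f q := hf.2.1 p q
      rw [abs_sub_le_iff]; constructor <;> linarith
end
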